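/- For the discrete-time LTV system x_{k+1} = F_k x_k + v_k, y_k = C_k x_k + D_k u_k obtained by exact sampling of ẋ = A(t)x + B(t)u at instants {t_k} (so F_k = Φ(t_{k+1},t_k)), uniform complete observability of the continuous-time pair (A(t), C(t)) is necessary for uniform complete observability of the sampled pair (Φ(t_{k+1},t_k), C(t_k)) when the sampling intervals are bounded: if the discrete-time observability Gramian Σ_{i=k}^{k+k₁} Ψ(i,k)ᵀ C_{t_i}ᵀ C_{t_i} Ψ(i,k) ⪰ δI for all k, then the continuous-time observability Gramian over [t_k, t_{k+k₁+1}] is also bounded below by δ′I for some δ′ > 0. -/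

import Mathlib

open Matrix

attribute [local instance] Matrix.normedAddCommGroup Matrix.normedSpace

namespace SampledUCOAux

lemma norm_mul_le'' {a b c : ℕ} (A : Matrix (Fin a) (Fin b) ℝ) (B : Matrix (Fin b) (Fin c) ℝ) :
    ‖A * B‖ ≤ (b : ℝ) * ‖A‖ * ‖B‖ := by
  rw [Matrix.norm_le_iff (by positivity)]
  intro i j
  calc ‖(A * B) i j‖ = |∑ k, A i k * B k j| := by
        simp [Matrix.mul_apply, Real.norm_eq_abs]
    _ ≤ ∑ k, |A i k * B k j| := Finset.abs_sum_le_sum_abs _ _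
    _ ≤ ∑ _k : Fin b, ‖A‖ * ‖B‖ := by
        refine Finset.sum_le_sum fun k _ => ?_
        rw [abs_mul]
        exact mul_le_mul (A.norm_entry_le_entrywise_sup_norm)
          (B.norm_entry_le_entrywise_sup_norm) (abs_nonneg _) (norm_nonneg _)
    _ = (b : ℝ) * ‖A‖ * ‖B‖ := by
        rw [Finset.sum_const, Finset.card_univ, Fintype.card_fin, nsmul_eq_mul]; ring

lemma mulVec_entry_abs_le {a b : ℕ} (M : Matrix (Fin a) (Fin b) ℝ) (x : Fin b → ℝ) (j : Fin a) :
    |(M *ᵥ x) j| ≤ (b : ℝ) * ‖M‖ * ‖x‖ := by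
  calc |(M *ᵥ x) j| = |∑ k, M j k * x k| := by simp [Matrix.mulVec, dotProduct]
    _ ≤ ∑ k, |M j k * x k| := Finset.abs_sum_le_sum_abs _ _
    _ ≤ ∑ _k : Fin b, ‖M‖ * ‖x‖ := by
        refine Finset.sum_le_sum fun k _ => ?_
        rw [abs_mul]
        exact mul_le_mul (M.norm_entry_le_entrywise_sup_norm)
          (norm_le_pi_norm x k) (abs_nonneg _) (norm_nonneg _)
    _ = (b : ℝ) * ‖M‖ * ‖x‖ := by
        rw [Finset.sum_const, Finset.card_univ, Fintype.card_fin, nsmul_eq_mul]; ring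

lemma sq_norm_le_dot {n : ℕ} (x : Fin n → ℝ) : ‖x‖ ^ 2 ≤ x ⬝ᵥ x := by
  rcases isEmpty_or_nonempty (Fin n) with h | h
  · have hx : x = 0 := Subsingleton.elim _ _
    simp [hx, dotProduct]
  · obtain ⟨i, -, hi⟩ := Finset.exists_mem_eq_sup (Finset.univ : Finset (Fin n))
      Finset.univ_nonempty (fun i => ‖x i‖₊)
    have hx : ‖x‖ = |x i| := by
      rw [Pi.norm_def, hi]
      simp [Real.norm_eq_abs]
    rw [hx]
    have h2 : |x i| ^ 2 = x i * x i := by rw [sq_abs]; ring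
    rw [h2]
    exact Finset.single_le_sum (fun j _ => mul_self_nonneg (x j)) (Finset.mem_univ i)

lemma dot_self_nonneg {n : ℕ} (x : Fin n → ℝ) : 0 ≤ x ⬝ᵥ x :=
  Finset.sum_nonneg fun i _ => mul_self_nonneg _

noncomputable def quadCLM {n : ℕ} (x : Fin n → ℝ) : Matrix (Fin n) (Fin n) ℝ →L[ℝ] ℝ :=
  LinearMap.toContinuousLinearMap
    { toFun := fun M => x ⬝ᵥ M *ᵥ x
      map_add' := fun M N => by simp [Matrix.add_mulVec, dotProduct_add]
      map_smul' := fun c M => by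
        simp [Matrix.smul_mulVec, dotProduct_smul, smul_eq_mul] }

@[simp] lemma quadCLM_apply {n : ℕ} (x : Fin n → ℝ) (M : Matrix (Fin n) (Fin n) ℝ) :
    quadCLM x M = x ⬝ᵥ M *ᵥ x := rfl

noncomputable def transCLM (n : ℕ) : Matrix (Fin n) (Fin n) ℝ →L[ℝ] Matrix (Fin n) (Fin n) ℝ :=
  LinearMap.toContinuousLinearMap
    (Matrix.transposeLinearEquiv (Fin n) (Fin n) ℝ ℝ).toLinearMap

@[simp] lemma transCLM_apply {n : ℕ} (M : Matrix (Fin n) (Fin n) ℝ) :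
    transCLM n M = Mᵀ := rfl

lemma quad_eq {n p : ℕ} (P : Matrix (Fin n) (Fin n) ℝ) (Cm : Matrix (Fin p) (Fin n) ℝ)
    (x : Fin n → ℝ) :
    x ⬝ᵥ (Pᵀ * Cmᵀ * Cm * P) *ᵥ x = ((Cm * P) *ᵥ x) ⬝ᵥ ((Cm * P) *ᵥ x) := by
  have h : Pᵀ * Cmᵀ * Cm * P = (Cm * P)ᵀ * (Cm * P) := by
    rw [Matrix.transpose_mul, Matrix.mul_assoc]
  rw [h, ← Matrix.mulVec_mulVec, Matrix.dotProduct_mulVec, Matrix.vecMul_transpose]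

end SampledUCOAux

open SampledUCOAux

set_option maxHeartbeats 2000000 in
/-- For the sampled LTV system with exact discretization
`F_k = Φ(t_{k+1}, t_k)` (so `Ψ(i,k) = Φ(t_i, t_k)`): if the output matrix `C` is bounded
and uniformly continuous, the (continuous, bounded) system matrix `A` generates the
transition matrix `Φ`, and the sampling intervals are uniformly bounded above and below,
then uniform complete observability of the sampled pair — i.e. the discrete Gramians
`∑_{i=k}^{k+k₁} Ψ(i,k)ᵀ C(t_i)ᵀ C(t_i) Ψ(i,k) ⪰ δ I` for all `k` — implies a uniform
lower bound `δ' I` on the continuous-time observability Gramians over `[t_k, t_{k+k₁+1}]`: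
continuous-time uniform complete observability is necessary for sampled UCO. -/
theorem sampled_UCO_implies_continuous_gramian_bound {n p : ℕ}
    (A : ℝ → Matrix (Fin n) (Fin n) ℝ) (C : ℝ → Matrix (Fin p) (Fin n) ℝ)
    (hA : Continuous A) (MA : ℝ) (hAbd : ∀ t, ‖A t‖ ≤ MA)
    (hC : UniformContinuous C) (MC : ℝ) (hCbd : ∀ t, ‖C t‖ ≤ MC)
    (Φ : ℝ → ℝ → Matrix (Fin n) (Fin n) ℝ)
    (hΦ : ∀ τ s, HasDerivAt (fun r => Φ r τ) (A s * Φ s τ) s)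
    (hΦinit : ∀ τ, Φ τ τ = 1)
    (t : ℕ → ℝ) (ht : StrictMono t)
    (Tmin Tmax : ℝ) (hTmin : 0 < Tmin)
    (hT : ∀ k, t (k + 1) - t k ∈ Set.Icc Tmin Tmax)
    (k₁ : ℕ) (δ : ℝ) (hδ : 0 < δ)
    (hUCO : ∀ k : ℕ,
      ((∑ i ∈ Finset.range (k₁ + 1),
          (Φ (t (k + i)) (t k))ᵀ * (C (t (k + i)))ᵀ * C (t (k + i)) * Φ (t (k + i)) (t k))
        - δ • (1 : Matrix (Fin n) (Fin n) ℝ)).PosSemidef) :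
    ∃ δ' : ℝ, 0 < δ' ∧ ∀ k : ℕ,
      ((∫ τ in t k..t (k + k₁ + 1), (Φ τ (t k))ᵀ * (C τ)ᵀ * C τ * Φ τ (t k))
        - δ' • (1 : Matrix (Fin n) (Fin n) ℝ)).PosSemidef := by
  classical
  rcases Nat.eq_zero_or_pos n with hn | hn
  · subst hn
    refine ⟨1, one_pos, fun k => ?_⟩
    exact Matrix.PosSemidef.of_dotProduct_mulVec_nonneg (Subsingleton.elim _ _) fun y => by simp [dotProduct]
  -- basic positivity facts
  have hMA0 : 0 ≤ MA := le_trans (norm_nonneg _) (hAbd 0)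
  have hMC0 : 0 ≤ MC := le_trans (norm_nonneg _) (hCbd 0)
  have hTmM : Tmin ≤ Tmax := by have h := hT 0; exact le_trans h.1 h.2
  have hTmax0 : 0 < Tmax := lt_of_lt_of_le hTmin hTmM
  obtain ⟨K, hK⟩ : ∃ K : ℝ, K = (n : ℝ) * MA := ⟨_, rfl⟩
  have hK0 : 0 ≤ K := by rw [hK]; exact mul_nonneg (Nat.cast_nonneg n) hMA0
  obtain ⟨T, hTdef⟩ : ∃ T : ℝ, T = ((k₁ : ℝ) + 1) * Tmax := ⟨_, rfl⟩
  have hT0 : 0 < T := by rw [hTdef]; exact mul_pos (by positivity) hTmax0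
  obtain ⟨B, hB⟩ : ∃ B : ℝ, B = Real.exp (K * T) := ⟨_, rfl⟩
  have hB1 : (1 : ℝ) ≤ B := by
    rw [hB]
    calc (1 : ℝ) = Real.exp 0 := Real.exp_zero.symm
      _ ≤ Real.exp (K * T) := Real.exp_le_exp.mpr (mul_nonneg hK0 hT0.le)
  have hB0 : (0 : ℝ) < B := lt_of_lt_of_le one_pos hB1
  -- continuity of Φ in first variable
  have hΦc : ∀ s0 : ℝ, Continuous (fun r => Φ r s0) := fun s0 =>
    continuous_iff_continuousAt.2 fun r => (hΦ s0 r).continuousAt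
  have hCc : Continuous C := hC.continuous
  -- sampling-time upper bound
  have htub : ∀ k j : ℕ, t (k + j) ≤ t k + (j : ℝ) * Tmax := by
    intro k j
    induction j with
    | zero => simp
    | succ j ih =>
      have h2 := (hT (k + j)).2
      have heq : k + (j + 1) = (k + j) + 1 := by omega
      rw [heq]
      push_cast
      push_cast at ih
      linarith
  -- Gronwall bound on Φ
  have hone : ‖(1 : Matrix (Fin n) (Fin n) ℝ)‖ ≤ 1 := by
    rw [Matrix.norm_le_iff zero_le_one]
    intro i j
    rw [Matrix.one_apply]
    split <;> simp
  have hΦbd : ∀ a : ℝ, ∀ s ∈ Set.Icc a (a + T), ‖Φ s a‖ ≤ B := by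
    intro a s hs
    have hgron := norm_le_gronwallBound_of_norm_deriv_right_le
      (f := fun r => Φ r a) (f' := fun r => A r * Φ r a) (δ := 1) (K := K) (ε := 0)
      (a := a) (b := a + T) ((hΦc a).continuousOn)
      (fun r _ => (hΦ a r).hasDerivWithinAt)
      (by simpa [hΦinit a] using hone)
      (fun r hr => by
        rw [add_zero]
        calc ‖A r * Φ r a‖ ≤ (n : ℝ) * ‖A r‖ * ‖Φ r a‖ := norm_mul_le'' _ _
          _ ≤ (n : ℝ) * MA * ‖Φ r a‖ := by
              have h1 := hAbd r
              have h2 := norm_nonneg (Φ r a)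
              linarith only [mul_nonneg (mul_nonneg (Nat.cast_nonneg (α := ℝ) n) h2)
                (sub_nonneg.2 h1)]
          _ = K * ‖Φ r a‖ := by rw [hK]) s hs
    calc ‖Φ s a‖ ≤ gronwallBound 1 K 0 (s - a) := hgron
      _ = Real.exp (K * (s - a)) := by rw [gronwallBound_ε0, one_mul]
      _ ≤ Real.exp (K * T) := by
          apply Real.exp_le_exp.2
          have hsa : s - a ≤ T := by have := hs.2; linarith
          exact mul_le_mul_of_nonneg_left hsa hK0
      _ = B := hB.symm
  -- Lipschitz bound on Φ
  have hΦlip : ∀ a : ℝ, ∀ σ ∈ Set.Icc a (a + T), ∀ τ ∈ Set.Icc a (a + T),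
      ‖Φ τ a - Φ σ a‖ ≤ K * B * |τ - σ| := by
    intro a σ hσ τ hτ
    have h := (convex_Icc a (a + T)).norm_image_sub_le_of_norm_hasDerivWithin_le
      (f := fun r => Φ r a) (f' := fun r => A r * Φ r a) (C := K * B)
      (fun r _ => (hΦ a r).hasDerivWithinAt)
      (fun r hr => by
        calc ‖A r * Φ r a‖ ≤ (n : ℝ) * ‖A r‖ * ‖Φ r a‖ := norm_mul_le'' _ _
          _ ≤ ((n : ℝ) * MA) * B := by
              have h1 := hAbd r
              have h2 := hΦbd a r hr
              have h3 := norm_nonneg (A r)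
              linarith only [mul_nonneg (Nat.cast_nonneg (α := ℝ) n)
                (add_nonneg (mul_nonneg (sub_nonneg.2 h1) hB0.le)
                  (mul_nonneg h3 (sub_nonneg.2 h2)))]
          _ = K * B := by rw [hK]) hσ hτ
    simpa [Real.norm_eq_abs] using h
  -- the modulus constants
  obtain ⟨Kw, hKw⟩ : ∃ Kw : ℝ, Kw = (n : ℝ) * ((n : ℝ) * MC * B) := ⟨_, rfl⟩
  have hKw0 : 0 ≤ Kw := by
    rw [hKw]
    exact mul_nonneg (Nat.cast_nonneg n)
      (mul_nonneg (mul_nonneg (Nat.cast_nonneg n) hMC0) hB0.le)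
  have h1MCK : 0 ≤ 1 + MC * K := by linarith only [mul_nonneg hMC0 hK0]
  obtain ⟨E, hE⟩ : ∃ E : ℝ, E = (p : ℝ) * (n : ℝ) * 2 * Kw * ((n : ℝ) * B * (1 + MC * K)) :=
    ⟨_, rfl⟩
  have hE0 : 0 ≤ E := by
    rw [hE]
    refine mul_nonneg (mul_nonneg (mul_nonneg (mul_nonneg ?_ ?_) ?_) hKw0) ?_
    · exact Nat.cast_nonneg p
    · exact Nat.cast_nonneg n
    · norm_num
    · exact mul_nonneg (mul_nonneg (Nat.cast_nonneg n) hB0.le) h1MCK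
  obtain ⟨D, hD⟩ : ∃ D : ℝ, D = E + 1 := ⟨_, rfl⟩
  have hD0 : 0 < D := by rw [hD]; linarith
  obtain ⟨ε₀, hε₀⟩ : ∃ e : ℝ, e = δ / (2 * ((k₁ : ℝ) + 1)) := ⟨_, rfl⟩
  have hε₀0 : 0 < ε₀ := by rw [hε₀]; exact div_pos hδ (by positivity)
  obtain ⟨εC, hεC⟩ : ∃ e : ℝ, e = ε₀ / (2 * D) := ⟨_, rfl⟩
  have hεC0 : 0 < εC := by rw [hεC]; exact div_pos hε₀0 (by linarith)
  -- uniform continuity modulus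
  obtain ⟨η₁, hη₁0, hη₁⟩ := Metric.uniformContinuous_iff.mp hC εC hεC0
  obtain ⟨η, hη⟩ : ∃ e : ℝ, e = min Tmin (min (η₁ / 2) (ε₀ / (2 * D))) := ⟨_, rfl⟩
  have hη0 : 0 < η := by
    rw [hη]
    exact lt_min hTmin (lt_min (by linarith) (div_pos hε₀0 (by linarith)))
  have hηTmin : η ≤ Tmin := by rw [hη]; exact min_le_left _ _
  have hηη₁ : η < η₁ := by
    have h1 : η ≤ η₁ / 2 := by rw [hη]; exact le_trans (min_le_right _ _) (min_le_left _ _)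
    linarith
  have hηD : η ≤ ε₀ / (2 * D) := by
    rw [hη]; exact le_trans (min_le_right _ _) (min_le_right _ _)
  refine ⟨η * ε₀, mul_pos hη0 hε₀0, ?_⟩
  intro k
  set a : ℝ := t k with ha
  set b : ℝ := t (k + k₁ + 1) with hb'
  have hbT : b ≤ a + T := by
    have h := htub k (k₁ + 1)
    have heq : k + (k₁ + 1) = k + k₁ + 1 := by omega
    rw [heq] at h
    rw [hb', ha, hTdef]
    push_cast at h ⊢
    linarith
  have hab : a ≤ b := ht.monotone (by omega)
  have hMc : Continuous (fun τ => (Φ τ a)ᵀ * (C τ)ᵀ * C τ * Φ τ a) :=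
    (((hΦc a).matrix_transpose.matrix_mul hCc.matrix_transpose).matrix_mul
      hCc).matrix_mul (hΦc a)
  have hMint : @IntervalIntegrable _ _ NormedAddGroup.toENormedAddMonoid (fun τ => (Φ τ a)ᵀ * (C τ)ᵀ * C τ * Φ τ a)
      MeasureTheory.volume a b := hMc.intervalIntegrable a b
  have hMt : ∀ τ : ℝ, ((Φ τ a)ᵀ * (C τ)ᵀ * C τ * Φ τ a)ᵀ
      = (Φ τ a)ᵀ * (C τ)ᵀ * C τ * Φ τ a := fun τ => by
    simp [Matrix.transpose_mul, Matrix.mul_assoc]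
  -- transpose of the Gramian
  have hGt : (∫ τ in a..b, (Φ τ a)ᵀ * (C τ)ᵀ * C τ * Φ τ a)ᵀ
      = ∫ τ in a..b, (Φ τ a)ᵀ * (C τ)ᵀ * C τ * Φ τ a := by
    have h := (transCLM n).intervalIntegral_comp_comm hMint
    exact h.symm.trans (intervalIntegral.integral_congr fun τ _ => hMt τ)
  refine Matrix.PosSemidef.of_dotProduct_mulVec_nonneg ?_ ?_
  · -- Hermitian
    rw [Matrix.IsHermitian, Matrix.conjTranspose_eq_transpose_of_trivial,
      Matrix.transpose_sub, hGt, Matrix.transpose_smul, Matrix.transpose_one]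
  · -- positivity of the quadratic form
    intro x
    obtain ⟨q, hqdef⟩ : ∃ q : ℝ → ℝ,
        q = fun τ => x ⬝ᵥ ((Φ τ a)ᵀ * (C τ)ᵀ * C τ * Φ τ a) *ᵥ x := ⟨_, rfl⟩
    have hqr : ∀ r : ℝ, q r = x ⬝ᵥ ((Φ r a)ᵀ * (C r)ᵀ * C r * Φ r a) *ᵥ x := fun r => by
      rw [hqdef]
    have hqw : ∀ r : ℝ, q r = ((C r * Φ r a) *ᵥ x) ⬝ᵥ ((C r * Φ r a) *ᵥ x) := fun r => by
      rw [hqr r, quad_eq]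
    have hqc : Continuous q := by
      rw [hqdef]
      exact (quadCLM x).continuous.comp hMc
    have hq0 : ∀ τ : ℝ, 0 ≤ q τ := fun τ => by
      rw [hqw τ]; exact dot_self_nonneg _
    have hqint : ∀ u v : ℝ, IntervalIntegrable q MeasureTheory.volume u v := fun u v =>
      hqc.intervalIntegrable u v
    -- the quadratic form of the integral is the integral of q
    have hint : x ⬝ᵥ (∫ τ in a..b, (Φ τ a)ᵀ * (C τ)ᵀ * C τ * Φ τ a) *ᵥ x
        = ∫ τ in a..b, q τ := by
      have h := (quadCLM x).intervalIntegral_comp_comm hMint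
      rw [hqdef]
      exact h.symm
    -- discrete UCO gives pigeonhole
    have hdis := (hUCO k).dotProduct_mulVec_nonneg x
    have hdis' : δ * (x ⬝ᵥ x) ≤ ∑ i ∈ Finset.range (k₁ + 1), q (t (k + i)) := by
      have hsum : x ⬝ᵥ ((∑ i ∈ Finset.range (k₁ + 1),
            (Φ (t (k + i)) a)ᵀ * (C (t (k + i)))ᵀ * C (t (k + i)) * Φ (t (k + i)) a) *ᵥ x)
          = ∑ i ∈ Finset.range (k₁ + 1), q (t (k + i)) := by
        have h := map_sum (quadCLM x)
          (fun i => (Φ (t (k + i)) a)ᵀ * (C (t (k + i)))ᵀ * C (t (k + i)) * Φ (t (k + i)) a)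
          (Finset.range (k₁ + 1))
        simp only [quadCLM_apply] at h
        rw [h]
        exact Finset.sum_congr rfl fun i _ => (hqr (t (k + i))).symm
      simp only [Matrix.sub_mulVec, dotProduct_sub, Matrix.smul_mulVec,
        Matrix.one_mulVec, dotProduct_smul, smul_eq_mul, star_trivial] at hdis
      rw [hsum] at hdis
      linarith only [hdis]
    have hpigeon : ∃ i ∈ Finset.range (k₁ + 1),
        δ / ((k₁ : ℝ) + 1) * (x ⬝ᵥ x) ≤ q (t (k + i)) := by
      refine Finset.exists_le_of_sum_le (f := fun _ => δ / ((k₁ : ℝ) + 1) * (x ⬝ᵥ x))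
        (g := fun i => q (t (k + i)))
        (Finset.nonempty_range_iff.mpr (Nat.succ_ne_zero k₁)) ?_
      rw [Finset.sum_const, Finset.card_range, nsmul_eq_mul]
      push_cast
      have hcast : ((k₁ : ℝ) + 1) ≠ 0 := by positivity
      calc ((k₁ : ℝ) + 1) * (δ / ((k₁ : ℝ) + 1) * (x ⬝ᵥ x))
          = δ * (x ⬝ᵥ x) := by field_simp
        _ ≤ _ := hdis'
    obtain ⟨i, hi_mem, hiq⟩ := hpigeon
    have hik : i ≤ k₁ := by
      have := Finset.mem_range.mp hi_mem
      omega
    set c : ℝ := t (k + i) with hc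
    have hac : a ≤ c := ht.monotone (by omega)
    have hcηb : c + η ≤ b := by
      have h1 := (hT (k + i)).1
      have h2 : t (k + i + 1) ≤ b := ht.monotone (by omega)
      linarith only [h1, h2, hηTmin]
    have hcaT : c ≤ a + T := by
      have hcb : c ≤ b := by linarith only [hcηb, hη0]
      linarith only [hcb, hbT]
    have hcmem : c ∈ Set.Icc a (a + T) := ⟨hac, hcaT⟩
    -- modulus of continuity estimate
    have hmod : ∀ τ ∈ Set.Icc a (a + T), |τ - c| ≤ η → |q τ - q c| ≤ ε₀ * ‖x‖ ^ 2 := by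
      intro τ hτ hd
      have hWbd : ∀ r ∈ Set.Icc a (a + T), ‖C r * Φ r a‖ ≤ (n : ℝ) * MC * B := by
        intro r hr
        calc ‖C r * Φ r a‖ ≤ (n : ℝ) * ‖C r‖ * ‖Φ r a‖ := norm_mul_le'' _ _
          _ ≤ (n : ℝ) * MC * B := by
              have h1 := hCbd r
              have h2 := hΦbd a r hr
              have h3 := norm_nonneg (C r)
              linarith only [mul_nonneg (Nat.cast_nonneg (α := ℝ) n)
                (add_nonneg (mul_nonneg (sub_nonneg.2 h1) hB0.le)
                  (mul_nonneg h3 (sub_nonneg.2 h2)))]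
      obtain ⟨u, hu⟩ : ∃ u : Fin p → ℝ, u = (C τ * Φ τ a) *ᵥ x := ⟨_, rfl⟩
      obtain ⟨v, hv⟩ : ∃ v : Fin p → ℝ, v = (C c * Φ c a) *ᵥ x := ⟨_, rfl⟩
      have huj : ∀ j, |u j| ≤ Kw * ‖x‖ := by
        intro j
        rw [hu]
        calc |((C τ * Φ τ a) *ᵥ x) j| ≤ (n : ℝ) * ‖C τ * Φ τ a‖ * ‖x‖ :=
              mulVec_entry_abs_le _ _ _
          _ ≤ Kw * ‖x‖ := by
              rw [hKw]
              have h1 := hWbd τ hτ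
              have h3 := norm_nonneg x
              linarith only [mul_nonneg (mul_nonneg (Nat.cast_nonneg (α := ℝ) n) h3)
                (sub_nonneg.2 h1)]
      have hvj : ∀ j, |v j| ≤ Kw * ‖x‖ := by
        intro j
        rw [hv]
        calc |((C c * Φ c a) *ᵥ x) j| ≤ (n : ℝ) * ‖C c * Φ c a‖ * ‖x‖ :=
              mulVec_entry_abs_le _ _ _
          _ ≤ Kw * ‖x‖ := by
              rw [hKw]
              have h1 := hWbd c hcmem
              have h3 := norm_nonneg x
              linarith only [mul_nonneg (mul_nonneg (Nat.cast_nonneg (α := ℝ) n) h3)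
                (sub_nonneg.2 h1)]
      -- C increment
      have hCd : ‖C τ - C c‖ ≤ εC := by
        have hdist : dist τ c < η₁ := by
          rw [Real.dist_eq]
          exact lt_of_le_of_lt hd hηη₁
        have h := hη₁ hdist
        rw [dist_eq_norm] at h
        exact h.le
      -- W increment
      obtain ⟨bound1, hbound1⟩ : ∃ e : ℝ,
          e = (n : ℝ) * εC * B + (n : ℝ) * MC * (K * B * η) := ⟨_, rfl⟩
      have hbound10 : 0 ≤ bound1 := by
        rw [hbound1]
        have h1 := mul_nonneg (mul_nonneg (Nat.cast_nonneg (α := ℝ) n) hεC0.le) hB0.le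
        have h2 := mul_nonneg (mul_nonneg (Nat.cast_nonneg (α := ℝ) n) hMC0)
          (mul_nonneg (mul_nonneg hK0 hB0.le) hη0.le)
        linarith only [h1, h2]
      have hWd : ‖C τ * Φ τ a - C c * Φ c a‖ ≤ bound1 := by
        have hsplit : C τ * Φ τ a - C c * Φ c a
            = (C τ - C c) * Φ τ a + C c * (Φ τ a - Φ c a) := by
          rw [Matrix.sub_mul, Matrix.mul_sub]
          abel
        rw [hsplit, hbound1]
        refine le_trans (norm_add_le _ _) ?_
        have h1 : ‖(C τ - C c) * Φ τ a‖ ≤ (n : ℝ) * εC * B := by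
          calc ‖(C τ - C c) * Φ τ a‖ ≤ (n : ℝ) * ‖C τ - C c‖ * ‖Φ τ a‖ := norm_mul_le'' _ _
            _ ≤ (n : ℝ) * εC * B := by
                have h2 := hΦbd a τ hτ
                have h3 := norm_nonneg (C τ - C c)
                linarith only [mul_nonneg (Nat.cast_nonneg (α := ℝ) n)
                  (add_nonneg (mul_nonneg (sub_nonneg.2 hCd) hB0.le)
                    (mul_nonneg h3 (sub_nonneg.2 h2)))]
        have h2 : ‖C c * (Φ τ a - Φ c a)‖ ≤ (n : ℝ) * MC * (K * B * η) := by
          calc ‖C c * (Φ τ a - Φ c a)‖ ≤ (n : ℝ) * ‖C c‖ * ‖Φ τ a - Φ c a‖ := norm_mul_le'' _ _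
            _ ≤ (n : ℝ) * MC * (K * B * η) := by
                have h3 := hCbd c
                have h4 := hΦlip a c hcmem τ hτ
                have h5 : ‖Φ τ a - Φ c a‖ ≤ K * B * η := by
                  refine le_trans h4 ?_
                  have h6 := mul_nonneg hK0 hB0.le
                  linarith only [mul_nonneg h6 (sub_nonneg.2 hd)]
                have h6 := norm_nonneg (C c)
                have h8 := mul_nonneg (mul_nonneg hK0 hB0.le) hη0.le
                linarith only [mul_nonneg (Nat.cast_nonneg (α := ℝ) n)
                  (add_nonneg (mul_nonneg (sub_nonneg.2 h3) h8)
                    (mul_nonneg h6 (sub_nonneg.2 h5)))]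
        linarith
      have hud : ∀ j, |u j - v j| ≤ (n : ℝ) * bound1 * ‖x‖ := by
        intro j
        have heq : u j - v j = ((C τ * Φ τ a - C c * Φ c a) *ᵥ x) j := by
          rw [hu, hv, Matrix.sub_mulVec]
          simp
        rw [heq]
        calc |((C τ * Φ τ a - C c * Φ c a) *ᵥ x) j|
            ≤ (n : ℝ) * ‖C τ * Φ τ a - C c * Φ c a‖ * ‖x‖ := mulVec_entry_abs_le _ _ _
          _ ≤ (n : ℝ) * bound1 * ‖x‖ := by
              have h3 := norm_nonneg x
              linarith only [mul_nonneg (mul_nonneg (Nat.cast_nonneg (α := ℝ) n) h3)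
                (sub_nonneg.2 hWd)]
      -- sum estimate
      have hqdiff : |q τ - q c| ≤ (p : ℝ) * (((n : ℝ) * bound1 * ‖x‖) * (2 * (Kw * ‖x‖))) := by
        rw [hqw τ, hqw c, ← hu, ← hv]
        have hdd : u ⬝ᵥ u - v ⬝ᵥ v = ∑ j, (u j * u j - v j * v j) := by
          rw [dotProduct, dotProduct, ← Finset.sum_sub_distrib]
        rw [hdd]
        refine le_trans (Finset.abs_sum_le_sum_abs _ _) ?_
        have hterm : ∀ j, |u j * u j - v j * v j|
            ≤ ((n : ℝ) * bound1 * ‖x‖) * (2 * (Kw * ‖x‖)) := by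
          intro j
          have he : u j * u j - v j * v j = (u j - v j) * (u j + v j) := by ring
          rw [he, abs_mul]
          have h3 : |u j + v j| ≤ 2 * (Kw * ‖x‖) := by
            refine le_trans (abs_add_le _ _) ?_
            have h4 := huj j
            have h5 := hvj j
            linarith only [h4, h5]
          refine mul_le_mul (hud j) h3 (abs_nonneg _) ?_
          exact mul_nonneg (mul_nonneg (Nat.cast_nonneg n) hbound10) (norm_nonneg x)
        calc ∑ j, |u j * u j - v j * v j|
            ≤ ∑ _j : Fin p, ((n : ℝ) * bound1 * ‖x‖) * (2 * (Kw * ‖x‖)) :=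
              Finset.sum_le_sum fun j _ => hterm j
          _ = (p : ℝ) * (((n : ℝ) * bound1 * ‖x‖) * (2 * (Kw * ‖x‖))) := by
              rw [Finset.sum_const, Finset.card_univ, Fintype.card_fin, nsmul_eq_mul]
      refine le_trans hqdiff ?_
      -- numeric endgame
      have hb1 : bound1 ≤ ((n : ℝ) * B * (1 + MC * K)) * (εC + η) := by
        have hexp : ((n : ℝ) * B * (1 + MC * K)) * (εC + η)
            - ((n : ℝ) * εC * B + (n : ℝ) * MC * (K * B * η))
            = (n : ℝ) * B * η + (n : ℝ) * B * MC * K * εC := by ring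
        have h1 : 0 ≤ (n : ℝ) * B * η :=
          mul_nonneg (mul_nonneg (Nat.cast_nonneg n) hB0.le) hη0.le
        have h2 : 0 ≤ (n : ℝ) * B * MC * K * εC :=
          mul_nonneg (mul_nonneg (mul_nonneg
            (mul_nonneg (Nat.cast_nonneg n) hB0.le) hMC0) hK0) hεC0.le
        rw [hbound1]
        linarith only [hexp.le, hexp.ge, h1, h2]
      have h5 : (0 : ℝ) ≤ (p : ℝ) * (n : ℝ) * 2 * Kw :=
        mul_nonneg (mul_nonneg (mul_nonneg (Nat.cast_nonneg p) (Nat.cast_nonneg n))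
          (by norm_num)) hKw0
      have h6 : (p : ℝ) * (n : ℝ) * 2 * Kw * bound1 ≤ E * (εC + η) := by
        calc (p : ℝ) * (n : ℝ) * 2 * Kw * bound1
            ≤ (p : ℝ) * (n : ℝ) * 2 * Kw * (((n : ℝ) * B * (1 + MC * K)) * (εC + η)) :=
              mul_le_mul_of_nonneg_left hb1 h5
          _ = E * (εC + η) := by rw [hE]; ring
      have h7 : E * (εC + η) ≤ D * (εC + η) := by
        refine mul_le_mul_of_nonneg_right ?_ (by linarith only [hεC0.le, hη0.le])
        rw [hD]; linarith only [hE0]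
      have h8 : D * (εC + η) ≤ ε₀ := by
        have h9 : εC + η ≤ ε₀ / D := by
          have h10 : ε₀ / (2 * D) + ε₀ / (2 * D) = ε₀ / D := by
            field_simp
            ring
          rw [hεC]
          linarith only [hηD, h10]
        calc D * (εC + η) ≤ D * (ε₀ / D) := mul_le_mul_of_nonneg_left h9 hD0.le
          _ = ε₀ := by field_simp
      have hfinal : (p : ℝ) * (n : ℝ) * 2 * Kw * bound1 ≤ ε₀ := le_trans h6 (le_trans h7 h8)
      calc (p : ℝ) * (((n : ℝ) * bound1 * ‖x‖) * (2 * (Kw * ‖x‖)))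
          = ((p : ℝ) * (n : ℝ) * 2 * Kw * bound1) * ‖x‖ ^ 2 := by ring
        _ ≤ ε₀ * ‖x‖ ^ 2 := mul_le_mul_of_nonneg_right hfinal (sq_nonneg _)
    -- pointwise lower bound on [c, c+η]
    have hpointwise : ∀ τ ∈ Set.Icc c (c + η), ε₀ * (x ⬝ᵥ x) ≤ q τ := by
      intro τ hτ
      have hτmem : τ ∈ Set.Icc a (a + T) := by
        constructor
        · linarith only [hτ.1, hac]
        · linarith only [hτ.2, hcηb, hbT]
      have hd : |τ - c| ≤ η := by
        rw [abs_le]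
        constructor
        · linarith only [hτ.1, hη0.le]
        · linarith only [hτ.2]
      have habs := (abs_le.1 (hmod τ hτmem hd)).1
      have hxx : ‖x‖ ^ 2 ≤ x ⬝ᵥ x := sq_norm_le_dot x
      have hhalf : δ / ((k₁ : ℝ) + 1) * (x ⬝ᵥ x) = 2 * ε₀ * (x ⬝ᵥ x) := by
        rw [hε₀]
        field_simp
      have hmul : ε₀ * ‖x‖ ^ 2 ≤ ε₀ * (x ⬝ᵥ x) := mul_le_mul_of_nonneg_left hxx hε₀0.le
      rw [hhalf] at hiq
      linarith only [habs, hmul, hiq]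
    -- integral lower bound
    have h1 : (∫ τ in a..c, q τ) + (∫ τ in c..b, q τ) = ∫ τ in a..b, q τ :=
      intervalIntegral.integral_add_adjacent_intervals (hqint _ _) (hqint _ _)
    have h2 : (∫ τ in c..(c + η), q τ) + (∫ τ in (c + η)..b, q τ) = ∫ τ in c..b, q τ :=
      intervalIntegral.integral_add_adjacent_intervals (hqint _ _) (hqint _ _)
    have h3 : 0 ≤ ∫ τ in a..c, q τ :=
      intervalIntegral.integral_nonneg hac fun u _ => hq0 u
    have h4 : 0 ≤ ∫ τ in (c + η)..b, q τ :=
      intervalIntegral.integral_nonneg hcηb fun u _ => hq0 u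
    have h5 : η * (ε₀ * (x ⬝ᵥ x)) ≤ ∫ τ in c..(c + η), q τ := by
      have hmono := intervalIntegral.integral_mono_on (by linarith only [hη0.le] : c ≤ c + η)
        (intervalIntegrable_const (c := ε₀ * (x ⬝ᵥ x))) (hqint _ _) hpointwise
      rw [intervalIntegral.integral_const, smul_eq_mul, add_sub_cancel_left] at hmono
      exact hmono
    -- conclude
    have hge : η * ε₀ * (x ⬝ᵥ x) ≤ x ⬝ᵥ (∫ τ in a..b, (Φ τ a)ᵀ * (C τ)ᵀ * C τ * Φ τ a) *ᵥ x := by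
      rw [hint]
      have heq : η * ε₀ * (x ⬝ᵥ x) = η * (ε₀ * (x ⬝ᵥ x)) := by ring
      linarith only [h1, h2, h3, h4, h5, heq.le, heq.ge]
    simp only [Matrix.sub_mulVec, dotProduct_sub, Matrix.smul_mulVec,
      Matrix.one_mulVec, dotProduct_smul, smul_eq_mul, star_trivial]
    linarith only [hge]
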